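/- arXiv:cs/0611120 — 6 statements merged into one kernel-verified Lean document; each statement's English description precedes it below -/
import Mathlib

section
/- Let X and Y be independent exponentially distributed random variables with means a > 0 and b > 0, and define the instantaneous secrecy capacity C_s = max(0, log₂(1+X) − log₂(1+Y)). Then for every target secrecy rate R > 0, the outage probability P(C_s < R) equals 1 − (a / (a + 2^R · b)) · exp(−(2^R − 1)/a). -/
open MeasureTheory ProbabilityTheory Real

lemma expMeasure_apply' {r : ℝ} {s : Set ℝ} (hs : MeasurableSet s) :
    expMeasure r s = ∫⁻ x in s, exponentialPDF r x := by
  rw [expMeasure, gammaMeasure, withDensity_apply _ hs]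
  rfl

lemma expMeasure_Iio {r : ℝ} (hr : 0 < r) (s : ℝ) :
    expMeasure r (Set.Iio s)
      = ENNReal.ofReal (if 0 ≤ s then 1 - Real.exp (-(r * s)) else 0) := by
  rw [expMeasure_apply' measurableSet_Iio,
    setLIntegral_congr (Iio_ae_eq_Iic (a := s) (μ := volume)),
    lintegral_exponentialPDF_eq_antiDeriv hr]

lemma lintegral_Ici_pdf {k : ℝ} (hk : 0 < k) :
    ∫⁻ y in Set.Ici (0 : ℝ), ENNReal.ofReal (k * Real.exp (-(k * y))) = 1 := by
  have h := lintegral_exponentialPDF_eq_one hk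
  rw [← lintegral_add_compl (exponentialPDF k) measurableSet_Ici] at h
  have h2 : ∫⁻ y in (Set.Ici (0:ℝ))ᶜ, exponentialPDF k y = 0 := by
    rw [Set.compl_Ici]
    exact lintegral_exponentialPDF_of_nonpos le_rfl
  rw [h2, add_zero] at h
  rw [← h]
  refine setLIntegral_congr_fun_ae measurableSet_Ici (ae_of_all _ fun y hy => ?_)
  rw [exponentialPDF_of_nonneg hy]

/-- Outage probability of the secrecy capacity (Theorem 1): for independent exponential
SNRs `X` (mean `a`) and `Y` (mean `b`), with secrecy capacity
`C_s = max 0 (log₂(1+X) - log₂(1+Y))`, and any target rate `R > 0`,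
`P(C_s < R) = 1 - (a / (a + 2^R b)) exp(-(2^R - 1)/a)`. -/
theorem outage_probability
    {Ω : Type*} [MeasureSpace Ω] [IsProbabilityMeasure (ℙ : Measure Ω)]
    (X Y : Ω → ℝ) (a b R : ℝ) (ha : 0 < a) (hb : 0 < b) (hR : 0 < R)
    (hXm : Measurable X) (hYm : Measurable Y)
    (hindep : IndepFun X Y ℙ)
    (hX : Measure.map X ℙ = expMeasure (1 / a))
    (hY : Measure.map Y ℙ = expMeasure (1 / b)) :
    ℙ {ω | max 0 (logb 2 (1 + X ω) - logb 2 (1 + Y ω)) < R}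
      = ENNReal.ofReal
          (1 - a / (a + 2 ^ R * b) * Real.exp (-(2 ^ R - 1) / a)) := by
  have ha' : (0:ℝ) < 1 / a := by positivity
  have hb' : (0:ℝ) < 1 / b := by positivity
  set t : ℝ := 2 ^ R with ht
  have ht1 : 1 < t := by
    rw [ht]
    exact Real.one_lt_rpow_iff_of_pos two_pos |>.2 (Or.inl ⟨one_lt_two, hR⟩)
  have ht0 : 0 < t := lt_trans one_pos ht1
  set c : ℝ := t - 1 with hc
  have hc0 : 0 < c := by simp [hc]; linarith
  -- a.e. nonnegativity of X and Y
  have haeX : ∀ᵐ ω ∂(ℙ : Measure Ω), 0 ≤ X ω := by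
    rw [ae_iff]
    have : {ω | ¬ 0 ≤ X ω} = X ⁻¹' Set.Iio 0 := by
      ext ω; simp [not_le]
    rw [this, ← Measure.map_apply hXm measurableSet_Iio, hX,
      expMeasure_apply' measurableSet_Iio, lintegral_exponentialPDF_of_nonpos le_rfl]
  have haeY : ∀ᵐ ω ∂(ℙ : Measure Ω), 0 ≤ Y ω := by
    rw [ae_iff]
    have : {ω | ¬ 0 ≤ Y ω} = Y ⁻¹' Set.Iio 0 := by
      ext ω; simp [not_le]
    rw [this, ← Measure.map_apply hYm measurableSet_Iio, hY,
      expMeasure_apply' measurableSet_Iio, lintegral_exponentialPDF_of_nonpos le_rfl]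
  -- rewrite the event
  have hset : ℙ {ω | max 0 (logb 2 (1 + X ω) - logb 2 (1 + Y ω)) < R}
      = ℙ {ω | X ω < t * Y ω + c} := by
    refine measure_congr ?_
    rw [Filter.eventuallyEq_set]
    filter_upwards [haeX, haeY] with ω hx hy
    have h1x : (0:ℝ) < 1 + X ω := by linarith
    have h1y : (0:ℝ) < 1 + Y ω := by linarith
    simp only [Set.mem_setOf_eq, max_lt_iff]
    constructor
    · rintro ⟨-, h⟩
      rw [sub_lt_iff_lt_add] at h
      have : logb 2 (1 + X ω) < logb 2 (t * (1 + Y ω)) := by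
        rwa [logb_mul (ne_of_gt ht0) (ne_of_gt h1y), ht, logb_rpow two_pos (by norm_num)]
      rw [logb_lt_logb_iff one_lt_two h1x (by positivity)] at this
      nlinarith
    · intro h
      refine ⟨hR, ?_⟩
      rw [sub_lt_iff_lt_add]
      have : logb 2 (1 + X ω) < logb 2 (t * (1 + Y ω)) := by
        rw [logb_lt_logb_iff one_lt_two h1x (by positivity)]
        nlinarith
      rwa [logb_mul (ne_of_gt ht0) (ne_of_gt h1y), ht, logb_rpow two_pos (by norm_num)] at this
  rw [hset]
  -- use independence to get a product measure
  haveI : IsProbabilityMeasure (expMeasure (1/a)) := isProbabilityMeasure_expMeasure ha'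
  haveI : IsProbabilityMeasure (expMeasure (1/b)) := isProbabilityMeasure_expMeasure hb'
  have hmapYX : Measure.map (fun ω => (Y ω, X ω)) ℙ
      = (expMeasure (1 / b)).prod (expMeasure (1 / a)) := by
    rw [← hY, ← hX]
    exact (indepFun_iff_map_prod_eq_prod_map_map hYm.aemeasurable hXm.aemeasurable).1
      hindep.symm
  have hT : MeasurableSet {p : ℝ × ℝ | p.2 < t * p.1 + c} :=
    measurableSet_lt measurable_snd (by fun_prop)
  have hS : {ω | X ω < t * Y ω + c} = (fun ω => (Y ω, X ω)) ⁻¹' {p : ℝ × ℝ | p.2 < t * p.1 + c} :=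
    rfl
  rw [hS, ← Measure.map_apply (hYm.prodMk hXm) hT, hmapYX,
    Measure.prod_apply hT]
  have hslice : ∀ y : ℝ, (Prod.mk y ⁻¹' {p : ℝ × ℝ | p.2 < t * p.1 + c}) = Set.Iio (t * y + c) := by
    intro y; rfl
  simp only [hslice]
  -- rewrite inner measures
  have hinner : ∀ y : ℝ, expMeasure (1 / a) (Set.Iio (t * y + c))
      = ENNReal.ofReal (if 0 ≤ t * y + c then 1 - Real.exp (-(1/a * (t * y + c))) else 0) :=
    fun y => expMeasure_Iio ha' _
  simp only [hinner]
  -- expand the outer measure as a withDensity integral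
  rw [show expMeasure (1 / b) = volume.withDensity (exponentialPDF (1 / b)) from rfl,
    lintegral_withDensity_eq_lintegral_mul _ (show Measurable (exponentialPDF (1/b)) from (measurable_exponentialPDFReal (1/b)).ennreal_ofReal)
      (by
        refine Measurable.ennreal_ofReal (Measurable.ite ?_ (by fun_prop) measurable_const)
        exact measurableSet_le measurable_const (by fun_prop))]
  rw [← lintegral_add_compl _ (measurableSet_Ici (a := (0:ℝ)))]
  have hneg : ∫⁻ y in (Set.Ici (0:ℝ))ᶜ,
      (exponentialPDF (1/b) * fun y => ENNReal.ofReal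
        (if 0 ≤ t * y + c then 1 - Real.exp (-(1/a * (t * y + c))) else 0)) y = 0 := by
    rw [Set.compl_Ici]
    refine (setLIntegral_congr_fun_ae measurableSet_Iio (ae_of_all _ fun y hy => ?_)).trans
      lintegral_zero
    simp only [Pi.mul_apply, exponentialPDF_of_neg (show y < 0 from hy), zero_mul]
  rw [hneg, add_zero]
  set k : ℝ := 1/b + 1/a * t with hk
  have hk0 : 0 < k := by positivity
  set D : ℝ := ((1/b) / k) * Real.exp (-(1/a * c)) with hD
  have hD0 : 0 ≤ D := by positivity
  have hD1 : D ≤ 1 := by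
    rw [hD]
    have h1 : (1/b) / k ≤ 1 := by
      rw [div_le_one hk0, hk]
      nlinarith
    have h2 : Real.exp (-(1/a * c)) ≤ 1 := by
      rw [Real.exp_le_one_iff]
      exact neg_nonpos.2 (by positivity)
    nlinarith [Real.exp_pos (-(1/a * c)), div_nonneg (le_of_lt hb') hk0.le]
  -- pointwise rewrite on Ici 0
  have hpt : ∀ y ∈ Set.Ici (0:ℝ),
      (exponentialPDF (1/b) * fun y => ENNReal.ofReal
        (if 0 ≤ t * y + c then 1 - Real.exp (-(1/a * (t * y + c))) else 0)) y
      = ENNReal.ofReal (1/b * Real.exp (-(1/b * y)))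
        - ENNReal.ofReal (D * (k * Real.exp (-(k * y)))) := by
    intro y hy
    have hy0 : (0:ℝ) ≤ y := hy
    have harg : 0 ≤ t * y + c := by positivity
    simp only [Pi.mul_apply, exponentialPDF_of_nonneg hy0, if_pos harg]
    rw [← ENNReal.ofReal_mul (by positivity)]
    have e1 : Real.exp (-(1/b * y)) * Real.exp (-(1/a * (t * y + c)))
        = Real.exp (-(1/a * c)) * Real.exp (-(k * y)) := by
      rw [← Real.exp_add, ← Real.exp_add]
      congr 1
      rw [hk]; ring
    have key : 1/b * Real.exp (-(1/b * y)) * (1 - Real.exp (-(1/a * (t * y + c))))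
        = 1/b * Real.exp (-(1/b * y)) - D * (k * Real.exp (-(k * y))) := by
      rw [hD, mul_sub, mul_one]
      congr 1
      rw [mul_assoc, e1]
      field_simp
    rw [key, ENNReal.ofReal_sub _ (by positivity)]
  rw [setLIntegral_congr_fun_ae measurableSet_Ici (ae_of_all _ hpt)]
  -- split the subtraction
  have hmeas2 : Measurable fun y => ENNReal.ofReal (D * (k * Real.exp (-(k * y)))) := by
    fun_prop
  have hI2 : ∫⁻ y in Set.Ici (0:ℝ), ENNReal.ofReal (D * (k * Real.exp (-(k * y))))
      = ENNReal.ofReal D := by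
    simp_rw [ENNReal.ofReal_mul hD0]
    rw [lintegral_const_mul _ (by fun_prop), lintegral_Ici_pdf hk0, mul_one]
  have hle : ∀ᵐ y ∂(volume.restrict (Set.Ici (0:ℝ))),
      ENNReal.ofReal (D * (k * Real.exp (-(k * y))))
        ≤ ENNReal.ofReal (1/b * Real.exp (-(1/b * y))) := by
    refine (ae_restrict_iff' measurableSet_Ici).2 (ae_of_all _ fun y hy => ?_)
    have hy0 : (0:ℝ) ≤ y := hy
    refine ENNReal.ofReal_le_ofReal ?_
    have h1 : D * (k * Real.exp (-(k * y))) ≤ (1/b) * Real.exp (-(k * y)) := by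
      have : D * k ≤ 1/b := by
        rw [hD]
        have : (1/b) / k * k = 1/b := div_mul_cancel₀ _ (ne_of_gt hk0)
        nlinarith [Real.exp_le_one_iff.2 (neg_nonpos.2 (by positivity : (0:ℝ) ≤ 1/a * c)),
          Real.exp_pos (-(1/a * c)), hk0]
      nlinarith [Real.exp_pos (-(k * y))]
    have h2 : Real.exp (-(k * y)) ≤ Real.exp (-(1/b * y)) := by
      apply Real.exp_le_exp.2
      rw [neg_le_neg_iff]
      rw [hk]; nlinarith [mul_nonneg (le_of_lt (mul_pos ha' ht0)) hy0]
    nlinarith [Real.exp_pos (-(k*y))]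
  rw [lintegral_sub hmeas2 (by rw [hI2]; exact ENNReal.ofReal_ne_top) hle,
    lintegral_Ici_pdf hb', hI2]
  -- final arithmetic
  have hfin : 1 - ENNReal.ofReal D = ENNReal.ofReal (1 - D) := by
    rw [ENNReal.ofReal_sub _ hD0, ENNReal.ofReal_one]
  rw [hfin]
  congr 1
  have hDval : D = a / (a + t * b) * Real.exp (-(t - 1) / a) := by
    rw [hD, hk, hc]
    have hab : a + t * b > 0 := by positivity
    congr 1
    · field_simp
      try ring
    · congr 1
      field_simp
      try ring
  rw [hDval]
end

section
/- Let X and Y be independent exponentially distributed random variables with means a > 0 and b > 0, and let R > 0. Then P(Y < X < 2^R·(1+Y) − 1) = a/(a+b) − (a/(a + 2^R·b)) · exp(−(2^R − 1)/a). -/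
open MeasureTheory ProbabilityTheory
open Real Set
open scoped ENNReal

lemma expMeasure_eq_withDensity (r : ℝ) :
    expMeasure r = volume.withDensity (exponentialPDF r) := rfl

lemma my_integral_exp_neg_mul_Ioi {k : ℝ} (hk : 0 < k) :
    ∫ y in Ioi (0:ℝ), Real.exp (-k * y) = 1 / k := by
  have h := integral_comp_mul_left_Ioi (fun x => Real.exp (-x)) 0 hk
  simp only [mul_zero, integral_exp_neg_Ioi, neg_zero, Real.exp_zero, smul_eq_mul, mul_one,
    neg_mul] at h ⊢
  rw [h]; rw [one_div]

lemma expMeasure_Iic' {r : ℝ} (hr : 0 < r) {x : ℝ} (hx : 0 ≤ x) :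
    expMeasure r (Iic x) = ENNReal.ofReal (1 - Real.exp (-(r * x))) := by
  rw [expMeasure_eq_withDensity, withDensity_apply _ measurableSet_Iic,
    lintegral_exponentialPDF_eq_antiDeriv hr, if_pos hx]

lemma expMeasure_Ioo' {r : ℝ} (hr : 0 < r) {l u : ℝ} (hl : 0 ≤ l) (hlu : l ≤ u) :
    expMeasure r (Ioo l u) = ENNReal.ofReal (Real.exp (-(r * l)) - Real.exp (-(r * u))) := by
  haveI := isProbabilityMeasure_expMeasure hr
  have hu : expMeasure r {u} = 0 := by
    rw [expMeasure_eq_withDensity, withDensity_apply _ (measurableSet_singleton u),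
      Measure.restrict_eq_zero.mpr (by simp), lintegral_zero_measure]
  have h2 : Ioc l u \ {u} = Ioo l u := Ioc_sdiff_right
  rw [← h2, measure_diff_null hu, ← Iic_sdiff_Iic,
    measure_diff (Iic_subset_Iic.2 hlu) measurableSet_Iic.nullMeasurableSet (measure_ne_top _ _),
    expMeasure_Iic' hr (hl.trans hlu), expMeasure_Iic' hr hl,
    ← ENNReal.ofReal_sub _ (by nlinarith [Real.exp_le_one_iff.mpr (neg_nonpos.2 (mul_nonneg hr.le hl))] : (0:ℝ) ≤ 1 - Real.exp (-(r*l)))]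
  congr 1; ring


/-- Key step in the outage probability computation: for independent exponential
random variables `X` (mean `a`) and `Y` (mean `b`) and `R > 0`,
`P(Y < X < 2^R (1+Y) - 1) = a/(a+b) - (a/(a + 2^R b)) exp(-(2^R - 1)/a)`. -/
theorem prob_between
    {Ω : Type*} [MeasureSpace Ω] [IsProbabilityMeasure (ℙ : Measure Ω)]
    (X Y : Ω → ℝ) (a b R : ℝ) (ha : 0 < a) (hb : 0 < b) (hR : 0 < R)
    (hXm : Measurable X) (hYm : Measurable Y)
    (hindep : IndepFun X Y ℙ)
    (hX : Measure.map X ℙ = expMeasure (1 / a))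
    (hY : Measure.map Y ℙ = expMeasure (1 / b)) :
    ℙ {ω | Y ω < X ω ∧ X ω < 2 ^ R * (1 + Y ω) - 1}
      = ENNReal.ofReal
          (a / (a + b) - a / (a + 2 ^ R * b) * Real.exp (-(2 ^ R - 1) / a)) := by
  have hra : (0:ℝ) < 1 / a := by positivity
  have hrb : (0:ℝ) < 1 / b := by positivity
  haveI := isProbabilityMeasure_expMeasure hra
  haveI := isProbabilityMeasure_expMeasure hrb
  set c : ℝ := 2 ^ R with hc
  have hc1 : 1 < c := Real.one_lt_rpow_iff_of_pos two_pos |>.2 (Or.inl ⟨one_lt_two, hR⟩)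
  have hc0 : 0 < c := lt_trans one_pos hc1
  set S : Set (ℝ × ℝ) := {p | p.1 < p.2 ∧ p.2 < c * (1 + p.1) - 1} with hS
  have hSm : MeasurableSet S :=
    (measurableSet_lt measurable_fst measurable_snd).inter
      (measurableSet_lt measurable_snd
        ((measurable_const.mul (measurable_const.add measurable_fst)).sub measurable_const))
  have hmap : Measure.map (fun ω => (Y ω, X ω)) ℙ
      = (expMeasure (1/b)).prod (expMeasure (1/a)) := by
    rw [← hY, ← hX]
    exact (indepFun_iff_map_prod_eq_prod_map_map hYm.aemeasurable hXm.aemeasurable).1 hindep.symm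
  have h1 : ℙ {ω | Y ω < X ω ∧ X ω < c * (1 + Y ω) - 1}
      = ((expMeasure (1/b)).prod (expMeasure (1/a))) S := by
    rw [← hmap, Measure.map_apply (hYm.prodMk hXm) hSm]
    rfl
  rw [h1, Measure.prod_apply hSm]
  have hslice : ∀ y : ℝ, Prod.mk y ⁻¹' S = Ioo y (c * (1 + y) - 1) := fun y => rfl
  -- a.e. nonneg under expMeasure (1/b)
  have hae : ∀ᵐ y ∂expMeasure (1/b), 0 ≤ y := by
    rw [ae_iff]
    have : {y : ℝ | ¬ 0 ≤ y} = Iio 0 := by ext y; simp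
    rw [this, expMeasure_eq_withDensity, withDensity_apply _ measurableSet_Iio]
    exact lintegral_exponentialPDF_of_nonpos le_rfl
  set G : ℝ → ℝ≥0∞ := fun y =>
    ENNReal.ofReal (Real.exp (-(1/a * y)) - Real.exp (-(1/a * (c * (1 + y) - 1)))) with hG
  have hGm : Measurable G := by
    apply Measurable.ennreal_ofReal
    fun_prop
  have h2 : ∫⁻ y, expMeasure (1/a) (Prod.mk y ⁻¹' S) ∂expMeasure (1/b) = ∫⁻ y, G y ∂expMeasure (1/b) := by
    apply lintegral_congr_ae
    filter_upwards [hae] with y hy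
    rw [hslice y, expMeasure_Ioo' hra hy (by nlinarith)]
  have hpdfm : Measurable (exponentialPDF (1/b)) :=
    (measurable_exponentialPDFReal (1/b)).ennreal_ofReal
  rw [h2, expMeasure_eq_withDensity,
    lintegral_withDensity_eq_lintegral_mul _ hpdfm hGm]
  have hzero : ∫⁻ y in Iio (0:ℝ), (exponentialPDF (1/b) * G) y = 0 := by
    rw [setLIntegral_congr_fun measurableSet_Iio
      (fun y (hy : y < 0) => show (exponentialPDF (1/b) * G) y = (0:ℝ≥0∞) by
        simp [exponentialPDF_of_neg hy]), lintegral_zero]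
  rw [← lintegral_add_compl ((exponentialPDF (1/b)) * G) measurableSet_Ici, compl_Ici, hzero,
    add_zero, ← MeasureTheory.restrict_Ioi_eq_restrict_Ici]
  set g : ℝ → ℝ := fun y =>
    (1/b * Real.exp (-(1/b * y))) * (Real.exp (-(1/a * y)) - Real.exp (-(1/a * (c * (1 + y) - 1)))) with hg
  have h3 : ∫⁻ y in Ioi (0:ℝ), (exponentialPDF (1/b) * G) y = ∫⁻ y in Ioi (0:ℝ), ENNReal.ofReal (g y) := by
    apply setLIntegral_congr_fun measurableSet_Ioi
    intro y (hy : 0 < y)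
    simp only [Pi.mul_apply, exponentialPDF_of_nonneg hy.le, hG, hg]
    rw [← ENNReal.ofReal_mul (by positivity)]
  rw [h3]
  -- decomposition of g
  set k₁ : ℝ := 1/b + 1/a with hk₁
  set k₂ : ℝ := 1/b + c/a with hk₂
  have hk₁0 : 0 < k₁ := by positivity
  have hk₂0 : 0 < k₂ := by positivity
  have hgd : ∀ y : ℝ, g y = 1/b * Real.exp (-k₁ * y)
      - (1/b * Real.exp (-((c-1)/a))) * Real.exp (-k₂ * y) := by
    intro y
    have e1 : (1:ℝ)/b * Real.exp (-k₁ * y)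
        = 1/b * Real.exp (-(1/b*y)) * Real.exp (-(1/a*y)) := by
      rw [mul_assoc, ← Real.exp_add]; congr 2; rw [hk₁]; ring
    have e2 : (1/b * Real.exp (-((c-1)/a))) * Real.exp (-k₂*y)
        = 1/b * Real.exp (-(1/b*y)) * Real.exp (-(1/a*(c*(1+y)-1))) := by
      rw [mul_assoc, mul_assoc, ← Real.exp_add, ← Real.exp_add]
      congr 2
      rw [hk₂]
      field_simp
      ring
    rw [e1, e2]
    simp only [hg]
    ring
  have hint1 : IntegrableOn (fun y => 1/b * Real.exp (-k₁ * y)) (Ioi (0:ℝ)) :=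
    (exp_neg_integrableOn_Ioi 0 hk₁0).const_mul _
  have hint2 : IntegrableOn (fun y => (1/b * Real.exp (-((c-1)/a))) * Real.exp (-k₂ * y)) (Ioi (0:ℝ)) :=
    (exp_neg_integrableOn_Ioi 0 hk₂0).const_mul _
  have hgi : IntegrableOn g (Ioi (0:ℝ)) := by
    exact (hint1.sub hint2).congr (ae_of_all _ fun y => (hgd y).symm)
  have hgnn : 0 ≤ᵐ[volume.restrict (Ioi (0:ℝ))] g := by
    rw [Filter.EventuallyLE, ae_restrict_iff' measurableSet_Ioi]
    apply ae_of_all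
    intro y (hy : 0 < y)
    have h5 : Real.exp (-(1/a * (c * (1 + y) - 1))) ≤ Real.exp (-(1/a * y)) := by
      apply Real.exp_le_exp.2
      have h6 : y ≤ c * (1 + y) - 1 := by nlinarith
      nlinarith [mul_le_mul_of_nonneg_left h6 hra.le]
    have h7 : (0:ℝ) ≤ 1/b * Real.exp (-(1/b * y)) := by positivity
    show (0:ℝ) ≤ g y
    rw [hg]
    exact mul_nonneg h7 (sub_nonneg.2 h5)
  rw [← ofReal_integral_eq_lintegral_ofReal hgi hgnn]
  congr 1
  rw [integral_congr_ae (ae_of_all _ hgd), integral_sub hint1 hint2,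
    integral_const_mul, integral_const_mul, my_integral_exp_neg_mul_Ioi hk₁0,
    my_integral_exp_neg_mul_Ioi hk₂0]
  have he : Real.exp (-(c - 1) / a) = Real.exp (-((c-1)/a)) := by rw [neg_div]
  rw [he, hk₁, hk₂]
  have hab : (0:ℝ) < a + b := by positivity
  have hacb : (0:ℝ) < a + c * b := by positivity
  field_simp
end

section
/- Let X and Y be independent exponentially distributed random variables with means a > 0 and b > 0, define C_s = max(0, log₂(1+X) − log₂(1+Y)), and let R > 0. Then the conditional probability P(C_s < R | X > Y) equals 1 − ((a+b)/(a + 2^R·b)) · exp(−(2^R − 1)/a). -/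
open MeasureTheory ProbabilityTheory Real Set

lemma exp_singleton {r : ℝ} (t : ℝ) : expMeasure r {t} = 0 := by
  rw [expMeasure, gammaMeasure, withDensity_apply _ (measurableSet_singleton t)]
  simp

lemma exp_Iio_zero {r : ℝ} : expMeasure r (Iio 0) = 0 := by
  rw [expMeasure, gammaMeasure, withDensity_apply _ measurableSet_Iio]
  exact lintegral_gammaPDF_of_nonpos le_rfl

lemma exp_Iic {r : ℝ} (hr : 0 < r) (t : ℝ) : expMeasure r (Iic t)
    = ENNReal.ofReal (if 0 ≤ t then 1 - rexp (-(r * t)) else 0) := by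
  rw [expMeasure, gammaMeasure, withDensity_apply _ measurableSet_Iic,
    ← lintegral_exponentialPDF_eq_antiDeriv hr t]
  rfl

lemma exp_Ioi {r : ℝ} (hr : 0 < r) {t : ℝ} (ht : 0 ≤ t) :
    expMeasure r (Ioi t) = ENNReal.ofReal (rexp (-(r * t))) := by
  have := isProbabilityMeasure_expMeasure hr
  have h1 : expMeasure r (Ioi t) = 1 - expMeasure r (Iic t) := by
    rw [← Set.compl_Iic, measure_compl measurableSet_Iic (measure_ne_top _ _), measure_univ]
  rw [h1, exp_Iic hr, if_pos ht, ← ENNReal.ofReal_one, ← ENNReal.ofReal_sub _ (by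
    simp [Real.exp_le_one_iff]; positivity)]
  norm_num

lemma exp_Ici {r : ℝ} (hr : 0 < r) {t : ℝ} (ht : 0 ≤ t) :
    expMeasure r (Ici t) = ENNReal.ofReal (rexp (-(r * t))) := by
  rw [← exp_Ioi hr ht, ← Set.Ici_sdiff_left, measure_diff_null (exp_singleton t)]

lemma exp_laplace {r s : ℝ} (hr : 0 < r) (hs : 0 ≤ s) :
    ∫⁻ y, ENNReal.ofReal (rexp (-(s * y))) ∂(expMeasure r)
      = ENNReal.ofReal (r / (r + s)) := by
  have hrs : 0 < r + s := by linarith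
  have hpdf : Measurable (gammaPDF 1 r) := (measurable_gammaPDFReal 1 r).ennreal_ofReal
  rw [expMeasure, gammaMeasure,
    lintegral_withDensity_eq_lintegral_mul _ hpdf (by fun_prop)]
  have hptw : ∀ y, (gammaPDF 1 r * fun y => ENNReal.ofReal (rexp (-(s * y)))) y
      = ENNReal.ofReal (r / (r + s)) * exponentialPDF (r + s) y := by
    intro y
    rcases lt_or_ge y 0 with h | h
    · simp [gammaPDF_of_neg h, exponentialPDF_of_neg h]
    · show gammaPDF 1 r y * ENNReal.ofReal (rexp (-(s * y))) = _
      have : gammaPDF 1 r y = exponentialPDF r y := rfl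
      rw [this, exponentialPDF_of_nonneg h, exponentialPDF_of_nonneg h,
        ← ENNReal.ofReal_mul (by positivity), ← ENNReal.ofReal_mul (by positivity)]
      congr 1
      rw [mul_assoc, ← Real.exp_add]
      have h2 : r / (r + s) * (r + s) = r := div_mul_cancel₀ _ (ne_of_gt hrs)
      have h3 : -(r * y) + -(s * y) = -((r + s) * y) := by ring
      rw [h3, ← mul_assoc, h2]
  rw [lintegral_congr hptw,
    lintegral_const_mul (ENNReal.ofReal (r/(r+s))) (f := exponentialPDF (r+s)) ((measurable_exponentialPDFReal _).ennreal_ofReal),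
    lintegral_exponentialPDF_eq_one hrs, mul_one]

/-- Conditional outage probability: for independent exponential random variables `X`
(mean `a`) and `Y` (mean `b`), secrecy capacity `C_s = max 0 (log₂(1+X) - log₂(1+Y))`
and target rate `R > 0`,
`P(C_s < R | X > Y) = 1 - ((a+b)/(a + 2^R b)) exp(-(2^R - 1)/a)`. -/
theorem conditional_outage_probability
    {Ω : Type*} [MeasureSpace Ω] [IsProbabilityMeasure (ℙ : Measure Ω)]
    (X Y : Ω → ℝ) (a b R : ℝ) (ha : 0 < a) (hb : 0 < b) (hR : 0 < R)
    (hXm : Measurable X) (hYm : Measurable Y)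
    (hindep : IndepFun X Y ℙ)
    (hX : Measure.map X ℙ = expMeasure (1 / a))
    (hY : Measure.map Y ℙ = expMeasure (1 / b)) :
    ProbabilityTheory.cond ℙ {ω | X ω > Y ω}
        {ω | max 0 (logb 2 (1 + X ω) - logb 2 (1 + Y ω)) < R}
      = ENNReal.ofReal
          (1 - (a + b) / (a + 2 ^ R * b) * Real.exp (-(2 ^ R - 1) / a)) := by
  have h1a : (0:ℝ) < 1 / a := by positivity
  have h1b : (0:ℝ) < 1 / b := by positivity
  set μ := expMeasure (1 / a) with hμ
  set ν := expMeasure (1 / b) with hν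
  have hμP : IsProbabilityMeasure μ := isProbabilityMeasure_expMeasure h1a
  have hνP : IsProbabilityMeasure ν := isProbabilityMeasure_expMeasure h1b
  set c : ℝ := 2 ^ R with hc
  have hc1 : 1 < c := by
    have : (2:ℝ) ^ (0:ℝ) < 2 ^ R := (Real.rpow_lt_rpow_left_iff one_lt_two).mpr hR
    simpa using this
  set d : ℝ := c - 1 with hd
  have hd0 : 0 < d := by simp [hd]; linarith
  -- measurability of logb-based function
  have hlogb : Measurable fun x : ℝ => logb 2 x := Real.measurable_log.div_const _
  -- joint law
  have hmap : Measure.map (fun ω => (X ω, Y ω)) ℙ = μ.prod ν := by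
    rw [← hX, ← hY]
    exact (ProbabilityTheory.indepFun_iff_map_prod_eq_prod_map_map
      hXm.aemeasurable hYm.aemeasurable).mp hindep
  have hpairm : Measurable fun ω => (X ω, Y ω) := hXm.prodMk hYm
  -- planar sets
  set T' : Set (ℝ × ℝ) := {p | p.2 < p.1} with hT'
  set A : Set (ℝ × ℝ) :=
    {p | p.2 < p.1 ∧ max 0 (logb 2 (1 + p.1) - logb 2 (1 + p.2)) < R} with hA
  set B : Set (ℝ × ℝ) := {p | p.2 < p.1 ∧ p.1 < c * p.2 + d} with hB
  have hT'm : MeasurableSet T' := measurableSet_lt measurable_snd measurable_fst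
  have hfun : Measurable fun p : ℝ × ℝ => max 0 (logb 2 (1 + p.1) - logb 2 (1 + p.2)) :=
    Measurable.max measurable_const
      ((hlogb.comp (measurable_const.add measurable_fst)).sub
        (hlogb.comp (measurable_const.add measurable_snd)))
  have hAm : MeasurableSet A :=
    (measurableSet_lt measurable_snd measurable_fst).inter
      (measurableSet_lt hfun measurable_const)
  have hBm : MeasurableSet B := (measurableSet_lt measurable_snd measurable_fst).inter
    (measurableSet_lt measurable_fst (by fun_prop))
  -- a.e. positive second coordinate
  have haeν : ∀ᵐ y ∂ν, 0 ≤ y := by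
    rw [ae_iff]
    have : {y : ℝ | ¬ 0 ≤ y} = Iio 0 := by ext y; simp
    rw [this, hν]; exact exp_Iio_zero
  -- denominator
  have h_denom : (μ.prod ν) T' = ENNReal.ofReal (a / (a + b)) := by
    rw [Measure.prod_apply_symm hT'm]
    have hslice : ∀ y : ℝ, (fun x => (x, y)) ⁻¹' T' = Ioi y := by
      intro y; ext x; simp [hT', Set.mem_Ioi]
    simp_rw [hslice]
    rw [lintegral_congr_ae (haeν.mono fun y hy => by rw [hμ, exp_Ioi h1a hy]),
      hν, exp_laplace h1b (le_of_lt h1a)]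
    congr 1
    rw [div_eq_div_iff (by positivity : (0:ℝ) < 1/b + 1/a).ne' (by positivity : (0:ℝ) < a + b).ne']
    field_simp
  -- numerator : A =ᵐ B
  have hnull : (μ.prod ν) {p : ℝ × ℝ | p.2 < 0} = 0 := by
    have : {p : ℝ × ℝ | p.2 < 0} = (univ : Set ℝ) ×ˢ Iio 0 := by ext p; simp
    rw [this, Measure.prod_prod, hν, exp_Iio_zero, mul_zero]
  have hAB : ∀ p : ℝ × ℝ, 0 ≤ p.2 → (p ∈ A ↔ p ∈ B) := by
    rintro ⟨x, y⟩ hy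
    simp only [hA, hB, Set.mem_setOf_eq]
    refine and_congr_right fun hyx => ?_
    have hy1 : (0:ℝ) < 1 + y := by linarith
    have hx1 : (0:ℝ) < 1 + x := by linarith
    rw [max_lt_iff]
    constructor
    · rintro ⟨-, h⟩
      rw [← Real.logb_div (ne_of_gt hx1) (ne_of_gt hy1),
        Real.logb_lt_iff_lt_rpow one_lt_two (by positivity),
        div_lt_iff₀ hy1] at h
      nlinarith [h]
    · intro h
      refine ⟨hR, ?_⟩
      rw [← Real.logb_div (ne_of_gt hx1) (ne_of_gt hy1),
        Real.logb_lt_iff_lt_rpow one_lt_two (by positivity), div_lt_iff₀ hy1]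
      nlinarith [h]
  have hABmeas : (μ.prod ν) A = (μ.prod ν) B := by
    apply measure_congr
    rw [Filter.eventuallyEq_set ]
    refine Filter.Eventually.mono ?_ (fun p hp => hAB p hp)
    rw [ae_iff]
    exact measure_mono_null (fun p hp => by simpa using hp) hnull
  have h_num : (μ.prod ν) A
      = ENNReal.ofReal (a / (a + b))
        - ENNReal.ofReal (rexp (-(d / a)) * (a / (a + b * c))) := by
    rw [hABmeas, Measure.prod_apply_symm hBm]
    have hslice : ∀ y : ℝ, (fun x => (x, y)) ⁻¹' B = Ioo y (c * y + d) := by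
      intro y; ext x; simp [hB, Set.mem_Ioo, and_comm]
    simp_rw [hslice]
    have hint : ∀ᵐ y ∂ν, μ (Ioo y (c * y + d))
        = ENNReal.ofReal (rexp (-(1 / a * y)))
          - ENNReal.ofReal (rexp (-(1 / a * (c * y + d)))) := by
      refine haeν.mono fun y hy => ?_
      have hlt : y < c * y + d := by nlinarith
      have hv0 : 0 ≤ c * y + d := by nlinarith
      rw [← Set.Ioi_diff_Ici, measure_diff (Set.Ici_subset_Ioi.mpr hlt)
        measurableSet_Ici.nullMeasurableSet (measure_ne_top _ _),
        hμ, exp_Ioi h1a hy, exp_Ici h1a hv0]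
    rw [lintegral_congr_ae hint]
    have hgm : Measurable fun y : ℝ => ENNReal.ofReal (rexp (-(1 / a * (c * y + d)))) := by
      fun_prop
    have hle : (fun y : ℝ => ENNReal.ofReal (rexp (-(1 / a * (c * y + d)))))
        ≤ᵐ[ν] fun y => ENNReal.ofReal (rexp (-(1 / a * y))) := by
      refine haeν.mono fun y hy => ?_
      refine ENNReal.ofReal_le_ofReal (Real.exp_le_exp.mpr ?_)
      have : y ≤ c * y + d := by nlinarith
      have := mul_le_mul_of_nonneg_left this (le_of_lt h1a)
      linarith
    have hgval : ∫⁻ y, ENNReal.ofReal (rexp (-(1 / a * (c * y + d)))) ∂ν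
        = ENNReal.ofReal (rexp (-(d / a)) * (a / (a + b * c))) := by
      have hrw : ∀ y : ℝ, rexp (-(1 / a * (c * y + d)))
          = rexp (-(d / a)) * rexp (-(c / a * y)) := by
        intro y; rw [← Real.exp_add]; congr 1; field_simp; ring
      simp_rw [hrw]
      simp_rw [ENNReal.ofReal_mul (le_of_lt (Real.exp_pos (-(d / a))))]
      rw [lintegral_const_mul _ (by fun_prop), hν, exp_laplace h1b (by positivity)]
      have hfrac : 1 / b / (1 / b + c / a) = a / (a + b * c) := by
        rw [div_eq_div_iff (by positivity : (0:ℝ) < 1/b + c/a).ne' (by positivity : (0:ℝ) < a + b * c).ne']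
        field_simp
      rw [hfrac, ← ENNReal.ofReal_mul (le_of_lt (Real.exp_pos _))]
    rw [lintegral_sub hgm (by rw [hgval]; exact ENNReal.ofReal_ne_top) hle, hgval, hν,
      exp_laplace h1b (le_of_lt h1a)]
    congr 2
    rw [div_eq_div_iff (by positivity : (0:ℝ) < 1/b + 1/a).ne' (by positivity : (0:ℝ) < a + b).ne']
    field_simp
  -- assemble
  have hTset : {ω | X ω > Y ω} = (fun ω => (X ω, Y ω)) ⁻¹' T' := rfl
  have hSint : {ω | X ω > Y ω} ∩ {ω | max 0 (logb 2 (1 + X ω) - logb 2 (1 + Y ω)) < R}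
      = (fun ω => (X ω, Y ω)) ⁻¹' A := by
    ext ω; simp [hA, Set.mem_setOf_eq, and_comm]
  rw [ProbabilityTheory.cond_apply (hTset ▸ hpairm hT'm) ℙ, hSint, hTset,
    ← Measure.map_apply hpairm hT'm, ← Measure.map_apply hpairm hAm, hmap, h_denom, h_num]
  -- final arithmetic
  set p : ℝ := a / (a + b) with hp
  set m : ℝ := rexp (-(d / a)) * (a / (a + b * c)) with hm
  have hp0 : 0 < p := by positivity
  have hm0 : 0 ≤ m := by positivity
  have hmp : m ≤ p := by
    have h1 : rexp (-(d / a)) ≤ 1 := Real.exp_le_one_iff.mpr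
      (neg_nonpos.mpr (by positivity))
    have h2 : a / (a + b * c) ≤ a / (a + b) := by
      apply div_le_div_of_nonneg_left (le_of_lt ha) (by positivity)
      nlinarith
    calc m ≤ 1 * (a / (a + b)) := by
            apply mul_le_mul h1 h2 (by positivity) zero_le_one
      _ = p := by rw [one_mul]
  rw [← ENNReal.ofReal_sub _ hm0, ← ENNReal.ofReal_inv_of_pos hp0,
    ← ENNReal.ofReal_mul (by positivity)]
  congr 1
  have hexp : rexp (-(2 ^ R - 1) / a) = rexp (-(d / a)) := by
    congr 1; rw [hd, hc]; ring
  rw [hexp, hp, hm]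
  have hab : (0:ℝ) < a + b := by linarith
  have habc : (0:ℝ) < a + b * c := by nlinarith
  have h2R : a + 2 ^ R * b = a + b * c := by rw [hc]; ring
  rw [h2R]
  field_simp
end

section
/- Fix b > 0 and R > 0, and for a > 0 define f(a) = 1 − (a/(a + 2^R·b)) · exp(−(2^R − 1)/a). Then a·f(a) tends to 2^R·b + 2^R − 1 as a tends to infinity; in particular, the outage probability f(a) decays as 1/a for large a. -/
open Real Filter

/-- High-SNR asymptotics of the outage probability: for fixed `b > 0` and `R > 0`, with
`f a = 1 - (a/(a + 2^R b)) exp(-(2^R - 1)/a)`, we have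
`a * f a → 2^R b + 2^R - 1` as `a → ∞`; in particular `f a` decays like `1/a`. -/
theorem outage_probability_high_snr (b R : ℝ) (hb : 0 < b) (hR : 0 < R) :
    Tendsto
      (fun a : ℝ => a * (1 - a / (a + 2 ^ R * b) * Real.exp (-(2 ^ R - 1) / a)))
      atTop (nhds (2 ^ R * b + 2 ^ R - 1)) := by
  set c : ℝ := 2 ^ R * b with hc
  set d : ℝ := 2 ^ R - 1 with hd
  have hcpos : 0 < c := mul_pos (rpow_pos_of_pos two_pos R) hb
  have h1 : Tendsto (fun a : ℝ => a / (a + c)) atTop (nhds 1) := by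
    have hden : Tendsto (fun a : ℝ => 1 + c * a⁻¹) atTop (nhds (1 + c * 0)) :=
      tendsto_const_nhds.add (tendsto_const_nhds.mul tendsto_inv_atTop_zero)
    have h' : Tendsto (fun a : ℝ => (1 + c * a⁻¹)⁻¹) atTop (nhds 1) := by
      have := hden.inv₀ (by norm_num)
      simpa using this
    refine h'.congr' ?_
    filter_upwards [eventually_gt_atTop 0] with a ha
    have hane : a + c ≠ 0 := by positivity
    field_simp
  have h2 : Tendsto (fun a : ℝ => a * (1 - Real.exp (-d / a))) atTop (nhds d) := by
    have hderiv : HasDerivAt (fun t : ℝ => 1 - Real.exp (-d * t)) d 0 := by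
      have h := ((hasDerivAt_id (0:ℝ)).const_mul (-d)).exp
      have h2 := (hasDerivAt_const (0:ℝ) (1:ℝ)).sub h
      simpa [Pi.sub_def] using h2
    have hslope := hasDerivAt_iff_tendsto_slope.mp hderiv
    have hinv : Tendsto (fun a : ℝ => a⁻¹) atTop (nhdsWithin 0 {(0:ℝ)}ᶜ) := by
      apply tendsto_nhdsWithin_of_tendsto_nhds_of_eventually_within _ tendsto_inv_atTop_zero
      filter_upwards [eventually_gt_atTop 0] with a ha
      simp [ha.ne']
    have hcomp := hslope.comp hinv
    refine hcomp.congr' ?_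
    filter_upwards [eventually_gt_atTop 0] with a ha
    have ha' : a ≠ 0 := ha.ne'
    simp only [Function.comp, slope_def_field, sub_zero, mul_zero, Real.exp_zero]
    field_simp
    ring
  have hmain : Tendsto (fun a : ℝ => a / (a + c) * (c + a * (1 - Real.exp (-d / a))))
      atTop (nhds (1 * (c + d))) := h1.mul (tendsto_const_nhds.add h2)
  have hmain' : Tendsto (fun a : ℝ => a / (a + c) * (c + a * (1 - Real.exp (-d / a))))
      atTop (nhds (c + 2 ^ R - 1)) := by
    have heq : (1:ℝ) * (c + d) = c + 2 ^ R - 1 := by rw [hd]; ring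
    rw [← heq]; exact hmain
  refine Tendsto.congr' ?_ hmain'
  filter_upwards [eventually_gt_atTop 0] with a ha
  have hane : a + c ≠ 0 := by positivity
  field_simp
  ring_nf
end

section
/- Let X and Y be independent exponentially distributed random variables with means a > 0 and b > 0, and define C_s = max(0, log₂(1+X) − log₂(1+Y)). Then the expected value of C_s equals the integral over R from 0 to ∞ of (a/(a + 2^R·b)) · exp(−(2^R − 1)/a) dR. -/
open MeasureTheory ProbabilityTheory Real

lemma expMeasure_Iio_zero (r : ℝ) : expMeasure r (Set.Iio 0) = 0 := by
  have h : expMeasure r (Set.Iio 0) = ∫⁻ y in Set.Iio 0, exponentialPDF r y := by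
    rw [expMeasure, gammaMeasure, withDensity_apply _ measurableSet_Iio]; rfl
  rw [h, lintegral_exponentialPDF_of_nonpos le_rfl]

lemma expMeasure_Ioi {r m : ℝ} (hr : 0 < r) (hm : 0 ≤ m) :
    expMeasure r (Set.Ioi m) = ENNReal.ofReal (Real.exp (-(r * m))) := by
  have hP : IsProbabilityMeasure (expMeasure r) := isProbabilityMeasure_expMeasure hr
  have he : Real.exp (-(r * m)) ≤ 1 := by
    rw [Real.exp_le_one_iff]; nlinarith
  have hIic : expMeasure r (Set.Iic m) = ENNReal.ofReal (1 - Real.exp (-(r * m))) := by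
    have h1 := cdf_expMeasure_eq hr m
    rw [if_pos hm] at h1
    have h2 : cdf (expMeasure r) m = (expMeasure r (Set.Iic m)).toReal := by
      exact cdf_eq_real _ m
    rw [h2] at h1
    rw [← h1, ENNReal.ofReal_toReal (measure_ne_top _ _)]
  rw [show Set.Ioi m = (Set.Iic m)ᶜ from (Set.compl_Iic).symm,
    measure_compl measurableSet_Iic (measure_ne_top _ _), measure_univ, hIic,
    (show (1 : ENNReal) = ENNReal.ofReal 1 from by simp)]
  rw [← ENNReal.ofReal_sub _ (by linarith [Real.exp_pos (-(r * m))] : (0:ℝ) ≤ 1 - Real.exp (-(r * m)))]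
  norm_num

lemma lintegral_exp_expMeasure {r k : ℝ} (hr : 0 < r) (hk : 0 ≤ k) :
    ∫⁻ y, ENNReal.ofReal (Real.exp (-(k * y))) ∂(expMeasure r)
      = ENNReal.ofReal (r / (r + k)) := by
  have hrk : 0 < r + k := by linarith
  have hmg : Measurable fun y : ℝ => ENNReal.ofReal (Real.exp (-(k * y))) := by fun_prop
  have hpdf : Measurable (gammaPDF 1 r) := (measurable_gammaPDFReal 1 r).ennreal_ofReal
  rw [expMeasure, gammaMeasure, lintegral_withDensity_eq_lintegral_mul _ hpdf hmg]
  have key : ∀ y : ℝ, (gammaPDF 1 r * fun y => ENNReal.ofReal (Real.exp (-(k * y)))) y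
      = ENNReal.ofReal (r / (r + k)) * exponentialPDF (r + k) y := by
    intro y
    simp only [Pi.mul_apply]
    have h0 : gammaPDF 1 r y = exponentialPDF r y := rfl
    rw [h0]
    rcases le_or_gt 0 y with hy | hy
    · rw [exponentialPDF_of_nonneg hy, exponentialPDF_of_nonneg hy,
        ← ENNReal.ofReal_mul (by positivity), ← ENNReal.ofReal_mul (by positivity)]
      congr 1
      have hrk' : r + k ≠ 0 := by positivity
      rw [mul_assoc, ← Real.exp_add]
      field_simp
      ring_nf
    · rw [exponentialPDF_of_neg hy, exponentialPDF_of_neg hy, zero_mul, mul_zero]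
  have hm2 : Measurable (exponentialPDF (r + k)) :=
    (measurable_exponentialPDFReal (r + k)).ennreal_ofReal
  rw [lintegral_congr key, lintegral_const_mul _ hm2,
    lintegral_exponentialPDF_eq_one hrk, mul_one]

/-- Average secrecy rate with perfect CSI: for independent exponential random variables
`X` (mean `a`) and `Y` (mean `b`) and secrecy capacity
`C_s = max 0 (log₂(1+X) - log₂(1+Y))`,
`E[C_s] = ∫₀^∞ (a/(a + 2^R b)) exp(-(2^R - 1)/a) dR`. -/
theorem average_secrecy_rate
    {Ω : Type*} [MeasureSpace Ω] [IsProbabilityMeasure (ℙ : Measure Ω)]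
    (X Y : Ω → ℝ) (a b : ℝ) (ha : 0 < a) (hb : 0 < b)
    (hXm : Measurable X) (hYm : Measurable Y)
    (hindep : IndepFun X Y ℙ)
    (hX : Measure.map X ℙ = expMeasure (1 / a))
    (hY : Measure.map Y ℙ = expMeasure (1 / b)) :
    ∫ ω, max 0 (logb 2 (1 + X ω) - logb 2 (1 + Y ω)) ∂ℙ
      = ∫ R in Set.Ioi (0 : ℝ),
          a / (a + 2 ^ R * b) * Real.exp (-(2 ^ R - 1) / a) := by
  set f : Ω → ℝ := fun ω => max 0 (logb 2 (1 + X ω) - logb 2 (1 + Y ω)) with hf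
  set g : ℝ → ℝ := fun R => a / (a + 2 ^ R * b) * Real.exp (-(2 ^ R - 1) / a) with hg
  have hfm : Measurable f := by
    apply measurable_const.max
    exact ((measurable_log.comp ((measurable_const.add hXm))).div_const _).sub
      ((measurable_log.comp ((measurable_const.add hYm))).div_const _)
  have hfnn : ∀ ω, 0 ≤ f ω := fun ω => le_max_left _ _
  have hX0 : ∀ᵐ ω ∂(ℙ : Measure Ω), 0 ≤ X ω := by
    rw [ae_iff]
    have h : {ω | ¬ 0 ≤ X ω} = X ⁻¹' Set.Iio 0 := by ext ω; simp [not_le]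
    rw [h, ← Measure.map_apply hXm measurableSet_Iio, hX, expMeasure_Iio_zero]
  have hY0 : ∀ᵐ ω ∂(ℙ : Measure Ω), 0 ≤ Y ω := by
    rw [ae_iff]
    have h : {ω | ¬ 0 ≤ Y ω} = Y ⁻¹' Set.Iio 0 := by ext ω; simp [not_le]
    rw [h, ← Measure.map_apply hYm measurableSet_Iio, hY, expMeasure_Iio_zero]
  have tail : ∀ R : ℝ, 0 < R → (ℙ : Measure Ω) {ω | R < f ω} = ENNReal.ofReal (g R) := by
    intro R hR
    set c : ℝ := 2 ^ R - 1 with hc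
    set d : ℝ := (2 : ℝ) ^ R with hd
    have hd0 : 0 < d := rpow_pos_of_pos two_pos R
    have hc0 : 0 ≤ c := by
      have h1 : (1 : ℝ) ≤ 2 ^ R := Real.one_le_rpow one_le_two hR.le
      simp only [hc]; linarith
    have hev : (ℙ : Measure Ω) {ω | R < f ω} = ℙ {ω | c + d * Y ω < X ω} := by
      apply measure_congr
      rw [Filter.eventuallyEq_set]
      filter_upwards [hX0, hY0] with ω hx hy
      simp only [Set.mem_setOf_eq, hf, lt_max_iff]
      rw [or_iff_right (not_lt.2 hR.le)]
      have hx1 : (0 : ℝ) < 1 + X ω := by linarith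
      have hy1 : (0 : ℝ) < 1 + Y ω := by linarith
      rw [lt_sub_iff_add_lt, Real.lt_logb_iff_rpow_lt one_lt_two hx1,
        Real.rpow_add two_pos, Real.rpow_logb two_pos (by norm_num) hy1]
      constructor <;> intro h <;> nlinarith
    have hmap : Measure.map (fun ω => (Y ω, X ω)) ℙ
        = (expMeasure (1 / b)).prod (expMeasure (1 / a)) := by
      rw [← hY, ← hX]
      exact (indepFun_iff_map_prod_eq_prod_map_map hYm.aemeasurable hXm.aemeasurable).mp
        hindep.symm
    have hs : MeasurableSet {p : ℝ × ℝ | c + d * p.1 < p.2} :=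
      measurableSet_lt (by fun_prop) measurable_snd
    have hpre : {ω | c + d * Y ω < X ω}
        = (fun ω => (Y ω, X ω)) ⁻¹' {p : ℝ × ℝ | c + d * p.1 < p.2} := rfl
    have hPa : IsProbabilityMeasure (expMeasure (1 / a)) :=
      isProbabilityMeasure_expMeasure (by positivity)
    have hPb : IsProbabilityMeasure (expMeasure (1 / b)) :=
      isProbabilityMeasure_expMeasure (by positivity)
    rw [hev, hpre, ← Measure.map_apply (hYm.prodMk hXm) hs, hmap, Measure.prod_apply hs]
    have hYae : ∀ᵐ y ∂(expMeasure (1 / b)), 0 ≤ y := by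
      rw [ae_iff]
      have h : {y : ℝ | ¬ 0 ≤ y} = Set.Iio 0 := by ext y; simp [not_le]
      rw [h, expMeasure_Iio_zero]
    have hcong : ∫⁻ y, expMeasure (1 / a) (Prod.mk y ⁻¹' {p : ℝ × ℝ | c + d * p.1 < p.2})
          ∂(expMeasure (1 / b))
        = ∫⁻ y, ENNReal.ofReal (Real.exp (-(c / a)))
            * ENNReal.ofReal (Real.exp (-((d / a) * y))) ∂(expMeasure (1 / b)) := by
      apply lintegral_congr_ae
      filter_upwards [hYae] with y hy
      have hpre2 : Prod.mk y ⁻¹' {p : ℝ × ℝ | c + d * p.1 < p.2} = Set.Ioi (c + d * y) := rfl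
      rw [hpre2, expMeasure_Ioi (by positivity) (by positivity),
        ← ENNReal.ofReal_mul (Real.exp_pos _).le, ← Real.exp_add]
      congr 2
      first
      | (field_simp; ring)
      | field_simp
    rw [hcong, lintegral_const_mul _ (by fun_prop),
      lintegral_exp_expMeasure (by positivity) (by positivity),
      ← ENNReal.ofReal_mul (Real.exp_pos _).le]
    congr 1
    simp only [hg]
    rw [← hd, ← hc, mul_comm]
    congr 1
    · first
      | (field_simp; ring)
      | field_simp
    · rw [neg_div]
  have hgnn : ∀ R : ℝ, 0 ≤ g R := by
    intro R
    have h1 : (0 : ℝ) < 2 ^ R := rpow_pos_of_pos two_pos R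
    have h2 : (0 : ℝ) < a + 2 ^ R * b := by positivity
    simp only [hg]
    positivity
  have h2R : Measurable fun R : ℝ => (2 : ℝ) ^ R :=
    (continuous_const.rpow continuous_id fun _ => Or.inl two_ne_zero).measurable
  have hgm : Measurable g := by
    simp only [hg]
    exact (measurable_const.div (measurable_const.add (h2R.mul measurable_const))).mul
      (Real.measurable_exp.comp (((h2R.sub measurable_const).neg).div_const a))
  rw [integral_eq_lintegral_of_nonneg_ae (Filter.Eventually.of_forall hfnn)
      hfm.aestronglyMeasurable,
    integral_eq_lintegral_of_nonneg_ae (Filter.Eventually.of_forall fun R => hgnn R)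
      hgm.aestronglyMeasurable,
    lintegral_eq_lintegral_meas_lt ℙ (Filter.Eventually.of_forall hfnn) hfm.aemeasurable]
  congr 1
  refine setLIntegral_congr_fun measurableSet_Ioi ?_
  intro R hR
  exact tail R hR
end

section
/- Let H₁, H₂, M₁, M₂ be independent real Gaussian random variables with mean 0 and variance 1/2, let D₁, D₂ be independent real Gaussian random variables with mean 0 and variance σ² > 0, with all six variables mutually independent, and let c_M > 0 and c_W > 0. Then P( c_W·((H₁+D₁)² + (H₂+D₂)²) < min( c_M·(M₁² + M₂²), c_W·(H₁² + H₂²) ) ) ≤ 1/2 − (1/2)·(1 + 2/σ²)^(−1/2). -/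
open MeasureTheory ProbabilityTheory
open scoped NNReal

open Real Set
open scoped ENNReal

noncomputable def gDen (v : ℝ≥0) (p : ℝ × ℝ) : ℝ≥0∞ :=
  ENNReal.ofReal ((2 * π * v)⁻¹ * rexp (-(p.1 ^ 2 + p.2 ^ 2) / (2 * v)))

lemma gDen_eq {v : ℝ≥0} (hv : v ≠ 0) (p : ℝ × ℝ) :
    gDen v p = gaussianPDF 0 v p.1 * gaussianPDF 0 v p.2 := by
  have hvpos : (0:ℝ) < 2 * π * v := by
    have : (0:ℝ) < (v:ℝ) := by exact_mod_cast pos_iff_ne_zero.2 hv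
    positivity
  rw [gDen, gaussianPDF, gaussianPDF, ← ENNReal.ofReal_mul (gaussianPDFReal_nonneg _ _ _)]
  congr 1
  rw [gaussianPDFReal, gaussianPDFReal]
  rw [mul_mul_mul_comm, ← mul_inv, Real.mul_self_sqrt hvpos.le, ← Real.exp_add]
  congr 1
  ring

lemma measurable_gDen (v : ℝ≥0) : Measurable (gDen v) := by
  unfold gDen
  fun_prop

lemma gauss_prod_den {v : ℝ≥0} (hv : v ≠ 0) :
    (gaussianReal 0 v).prod (gaussianReal 0 v)
      = (volume : Measure (ℝ × ℝ)).withDensity (gDen v) := by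
  refine Measure.prod_eq fun s t hs ht => ?_
  rw [withDensity_apply _ (hs.prod ht), Measure.volume_eq_prod, ← Measure.prod_restrict]
  simp_rw [gDen_eq hv]
  rw [lintegral_prod_mul (measurable_gaussianPDF _ _).aemeasurable
    (measurable_gaussianPDF _ _).aemeasurable,
    gaussianReal_apply _ hv, gaussianReal_apply _ hv]

noncomputable def rotL (a b : ℝ) : (ℝ × ℝ) →ₗ[ℝ] (ℝ × ℝ) where
  toFun p := (a * p.1 + b * p.2, -b * p.1 + a * p.2)
  map_add' p q := by ext <;> simp <;> ring
  map_smul' c p := by ext <;> simp <;> ring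

lemma rotL_det (a b : ℝ) : LinearMap.det (rotL a b) = a ^ 2 + b ^ 2 := by
  let B := Module.Basis.finTwoProd ℝ
  rw [← LinearMap.det_toMatrix B]
  rw [Matrix.det_fin_two]
  simp [LinearMap.toMatrix_apply, rotL, B, Module.Basis.finTwoProd_zero, Module.Basis.finTwoProd_one]
  ring

lemma rotL_map_volume (a b : ℝ) (hab : a ^ 2 + b ^ 2 = 1) :
    Measure.map (rotL a b) (volume : Measure (ℝ × ℝ)) = volume := by
  have hdet : LinearMap.det (rotL a b) ≠ 0 := by rw [rotL_det, hab]; norm_num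
  rw [Measure.map_linearMap_addHaar_eq_smul_addHaar _ hdet, rotL_det, hab]
  simp

lemma rotL_measurable (a b : ℝ) : Measurable (rotL a b) :=
  (rotL a b).continuous_of_finiteDimensional.measurable

lemma rot_invariant {v : ℝ≥0} (hv : v ≠ 0) (a b : ℝ) (hab : a ^ 2 + b ^ 2 = 1) :
    Measure.map (rotL a b) ((gaussianReal 0 v).prod (gaussianReal 0 v))
      = (gaussianReal 0 v).prod (gaussianReal 0 v) := by
  rw [gauss_prod_den hv]
  ext s hs
  rw [Measure.map_apply (rotL_measurable a b) hs,
    withDensity_apply _ ((rotL_measurable a b) hs), withDensity_apply _ hs]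
  have key : ∀ p, gDen v (rotL a b p) = gDen v p := by
    intro p
    have h : ((rotL a b) p).1 ^ 2 + ((rotL a b) p).2 ^ 2 = p.1 ^ 2 + p.2 ^ 2 := by
      show (a * p.1 + b * p.2) ^ 2 + (-b * p.1 + a * p.2) ^ 2 = _
      linear_combination (p.1 ^ 2 + p.2 ^ 2) * hab
    unfold gDen
    rw [h]
  calc ∫⁻ p in (rotL a b) ⁻¹' s, gDen v p
      = ∫⁻ p in (rotL a b) ⁻¹' s, gDen v ((rotL a b) p) := by simp_rw [key]
    _ = ∫⁻ p in s, gDen v p ∂(Measure.map (rotL a b) volume) := by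
        rw [setLIntegral_map hs (measurable_gDen v) (rotL_measurable a b)]
    _ = ∫⁻ p in s, gDen v p := by rw [rotL_map_volume a b hab]

lemma proj_rot {v : ℝ≥0} (hv : v ≠ 0) (a b : ℝ) (hab : a ^ 2 + b ^ 2 = 1) :
    Measure.map (fun p : ℝ × ℝ => a * p.1 + b * p.2)
      ((gaussianReal 0 v).prod (gaussianReal 0 v)) = gaussianReal 0 v := by
  have : (fun p : ℝ × ℝ => a * p.1 + b * p.2) = Prod.fst ∘ (rotL a b) := rfl
  rw [this, ← Measure.map_map measurable_fst (rotL_measurable a b),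
    rot_invariant hv a b hab, Measure.map_fst_prod]
  simp

lemma lin_comb_law {v : ℝ≥0} (hv : v ≠ 0) (a b : ℝ) (hab : a ^ 2 + b ^ 2 ≠ 0) :
    Measure.map (fun p : ℝ × ℝ => a * p.1 + b * p.2)
      ((gaussianReal 0 v).prod (gaussianReal 0 v))
      = Measure.map (fun x => Real.sqrt (a ^ 2 + b ^ 2) * x) (gaussianReal 0 v) := by
  set s := Real.sqrt (a ^ 2 + b ^ 2) with hs
  have hs2 : s ^ 2 = a ^ 2 + b ^ 2 := Real.sq_sqrt (by positivity)
  have hspos : 0 < s := Real.sqrt_pos.2 (lt_of_le_of_ne (by positivity) (Ne.symm hab))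
  have h1 : (fun p : ℝ × ℝ => a * p.1 + b * p.2)
      = (fun x => s * x) ∘ (fun p : ℝ × ℝ => (a / s) * p.1 + (b / s) * p.2) := by
    funext p
    simp only [Function.comp_apply]
    field_simp
  have h2 : (a / s) ^ 2 + (b / s) ^ 2 = 1 := by
    field_simp [hs2]
    exact hs2.symm
  rw [h1, ← Measure.map_map (by fun_prop) (by fun_prop), proj_rot hv _ _ h2]

lemma inner_prob {v : ℝ≥0} (hv : v ≠ 0) (d : ℝ × ℝ) (hd : d ≠ 0) :
    ((gaussianReal 0 v).prod (gaussianReal 0 v))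
        {h : ℝ × ℝ | 2 * d.1 * h.1 + 2 * d.2 * h.2 + (d.1 ^ 2 + d.2 ^ 2) < 0}
      = gaussianReal 0 v (Set.Iio (-(Real.sqrt (d.1 ^ 2 + d.2 ^ 2)) / 2)) := by
  set r := Real.sqrt (d.1 ^ 2 + d.2 ^ 2) with hr
  have hd2 : d.1 ^ 2 + d.2 ^ 2 ≠ 0 := by
    intro h
    apply hd
    have h1 : d.1 = 0 := by nlinarith [sq_nonneg d.1, sq_nonneg d.2]
    have h2 : d.2 = 0 := by nlinarith [sq_nonneg d.1, sq_nonneg d.2]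
    exact Prod.ext h1 h2
  have hd2pos : 0 < d.1 ^ 2 + d.2 ^ 2 := lt_of_le_of_ne (by positivity) (Ne.symm hd2)
  have hrpos : 0 < r := Real.sqrt_pos.2 hd2pos
  have hr2 : r ^ 2 = d.1 ^ 2 + d.2 ^ 2 := Real.sq_sqrt hd2pos.le
  have hset : {h : ℝ × ℝ | 2 * d.1 * h.1 + 2 * d.2 * h.2 + (d.1 ^ 2 + d.2 ^ 2) < 0}
      = (fun p : ℝ × ℝ => (2 * d.1) * p.1 + (2 * d.2) * p.2) ⁻¹' (Set.Iio (-(d.1 ^ 2 + d.2 ^ 2))) := by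
    ext p
    simp only [Set.mem_setOf_eq, Set.mem_preimage, Set.mem_Iio]
    constructor <;> intro h <;> linarith
  rw [hset, ← Measure.map_apply (by fun_prop) measurableSet_Iio,
    lin_comb_law hv _ _ (by nlinarith),
    Measure.map_apply (by fun_prop) measurableSet_Iio]
  have hsq : Real.sqrt ((2 * d.1) ^ 2 + (2 * d.2) ^ 2) = 2 * r := by
    rw [hr]
    rw [show (2 * d.1) ^ 2 + (2 * d.2) ^ 2 = 4 * (d.1 ^ 2 + d.2 ^ 2) by ring]
    rw [show (4 : ℝ) * (d.1 ^ 2 + d.2 ^ 2) = 2 ^ 2 * (d.1 ^ 2 + d.2 ^ 2) by norm_num,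
      Real.sqrt_mul (by positivity), Real.sqrt_sq (by norm_num)]
  rw [hsq]
  congr 1
  ext x
  simp only [Set.mem_preimage, Set.mem_Iio]
  rw [← hr2]
  constructor <;> intro h <;> nlinarith

lemma radial_integral {v : ℝ≥0} (hv : v ≠ 0) (R : ℝ) (hR : 0 < R) :
    ∫ r in Set.Ioo 0 R, r * rexp (-r ^ 2 / (2 * (v:ℝ)))
      = (v:ℝ) * (1 - rexp (-R ^ 2 / (2 * (v:ℝ)))) := by
  have hvpos : (0:ℝ) < v := by exact_mod_cast pos_iff_ne_zero.2 hv
  have key : ∫ r in (0:ℝ)..R, r * rexp (-r ^ 2 / (2 * (v:ℝ)))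
      = (v:ℝ) * (1 - rexp (-R ^ 2 / (2 * (v:ℝ)))) := by
    have hderiv : ∀ x ∈ Set.uIcc (0:ℝ) R,
        HasDerivAt (fun r : ℝ => -(v:ℝ) * rexp (-r ^ 2 / (2 * (v:ℝ))))
          (x * rexp (-x ^ 2 / (2 * (v:ℝ)))) x := by
      intro x _
      have h1 : HasDerivAt (fun r : ℝ => -r ^ 2 / (2 * (v:ℝ))) (-(2 * x) / (2 * (v:ℝ))) x := by
        simpa using ((hasDerivAt_pow 2 x).neg.div_const (2 * (v:ℝ)))
      have h2 := (h1.exp).const_mul (-(v:ℝ))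
      refine h2.congr_deriv ?_
      field_simp [hvpos.ne']
    have hint : IntervalIntegrable (fun r : ℝ => r * rexp (-r ^ 2 / (2 * (v:ℝ)))) volume 0 R :=
      (continuous_id.mul (by fun_prop : Continuous fun r : ℝ => rexp (-r ^ 2 / (2 * (v:ℝ))))).intervalIntegrable 0 R
    rw [intervalIntegral.integral_eq_sub_of_hasDerivAt hderiv hint]
    simp
    ring
  rw [← key, intervalIntegral.integral_of_le hR.le, integral_Ioc_eq_integral_Ioo]

lemma disk_prob {v : ℝ≥0} (hv : v ≠ 0) (R : ℝ) (hR : 0 < R) :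
    ((gaussianReal 0 v).prod (gaussianReal 0 v)) {p : ℝ × ℝ | p.1 ^ 2 + p.2 ^ 2 < R ^ 2}
      = ENNReal.ofReal (1 - rexp (-R ^ 2 / (2 * (v:ℝ)))) := by
  have hvpos : (0:ℝ) < v := by exact_mod_cast pos_iff_ne_zero.2 hv
  have hSm : MeasurableSet {p : ℝ × ℝ | p.1 ^ 2 + p.2 ^ 2 < R ^ 2} :=
    measurableSet_lt (by fun_prop) measurable_const
  set f : ℝ × ℝ → ℝ := fun p => (2 * π * (v:ℝ))⁻¹ * rexp (-(p.1 ^ 2 + p.2 ^ 2) / (2 * (v:ℝ)))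
    with hf
  have hfc : Continuous f := by fun_prop
  have hfnn : ∀ p, 0 ≤ f p := fun p => by positivity
  -- integrability of f on ℝ²
  have hfi : Integrable f := by
    have h1 : Integrable (fun x : ℝ => (2 * π * (v:ℝ))⁻¹ * rexp (-(2 * (v:ℝ))⁻¹ * x ^ 2)) :=
      (integrable_exp_neg_mul_sq (by positivity)).const_mul _
    have h2 : Integrable (fun x : ℝ => rexp (-(2 * (v:ℝ))⁻¹ * x ^ 2)) :=
      integrable_exp_neg_mul_sq (by positivity)
    have h3 := h1.mul_prod h2
    rw [← Measure.volume_eq_prod] at h3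
    refine h3.congr (Filter.Eventually.of_forall fun z => ?_)
    rw [hf]
    simp only [← Real.exp_add, mul_assoc]
    congr 2
    field_simp
    ring
  -- reduce to real integral
  rw [gauss_prod_den hv, withDensity_apply _ hSm]
  have hgd : ∀ p : ℝ × ℝ, gDen v p = ENNReal.ofReal (f p) := fun p => rfl
  simp_rw [hgd]
  rw [← ofReal_integral_eq_lintegral_ofReal hfi.integrableOn
    (Filter.Eventually.of_forall fun p => hfnn p)]
  congr 1
  -- polar coordinates
  set S := {p : ℝ × ℝ | p.1 ^ 2 + p.2 ^ 2 < R ^ 2} with hS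
  set f0 : ℝ → ℝ := fun r => r * ((2 * π * (v:ℝ))⁻¹ * rexp (-r ^ 2 / (2 * (v:ℝ)))) with hf0
  have hpolar := integral_comp_polarCoord_symm (Set.indicator S f)
  rw [integral_indicator hSm] at hpolar
  rw [← hpolar]
  have htarget : polarCoord.target = Set.Ioi (0:ℝ) ×ˢ Set.Ioo (-π) π := rfl
  have hcongr : ∫ p in polarCoord.target, p.1 • Set.indicator S f (polarCoord.symm p)
      = ∫ p in Set.Ioi (0:ℝ) ×ˢ Set.Ioo (-π) π,
          (Set.indicator (Set.Ioo 0 R) f0 p.1) * (1:ℝ) := by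
    rw [htarget]
    refine setIntegral_congr_fun (measurableSet_Ioi.prod measurableSet_Ioo) fun p hp => ?_
    obtain ⟨hp1, _⟩ := hp
    have hsymm : polarCoord.symm p = (p.1 * cos p.2, p.1 * sin p.2) := rfl
    have hsq : (polarCoord.symm p).1 ^ 2 + (polarCoord.symm p).2 ^ 2 = p.1 ^ 2 := by
      rw [hsymm]
      show (p.1 * cos p.2) ^ 2 + (p.1 * sin p.2) ^ 2 = p.1 ^ 2
      linear_combination p.1 ^ 2 * sin_sq_add_cos_sq p.2
    have hmem : polarCoord.symm p ∈ S ↔ p.1 ∈ Set.Ioo 0 R := by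
      have hp1' : (0:ℝ) < p.1 := hp1
      change ((polarCoord.symm p).1 ^ 2 + (polarCoord.symm p).2 ^ 2 < R ^ 2) ↔ _
      rw [hsq, Set.mem_Ioo]
      constructor
      · intro h
        exact ⟨hp1', lt_of_pow_lt_pow_left₀ 2 hR.le h⟩
      · intro h
        exact pow_lt_pow_left₀ h.2 hp1'.le (by norm_num)
    by_cases hc : p.1 ∈ Set.Ioo 0 R
    · rw [Set.indicator_of_mem hc, Set.indicator_of_mem (hmem.2 hc), hf, hf0]
      simp only [smul_eq_mul]
      rw [hsq]
      ring
    · rw [Set.indicator_of_notMem hc, Set.indicator_of_notMem (fun h => hc (hmem.1 h))]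
      simp
  have hprodint := setIntegral_prod_mul (μ := (volume : Measure ℝ)) (ν := (volume : Measure ℝ))
    (fun r : ℝ => (Set.Ioo 0 R).indicator f0 r) (fun _ : ℝ => (1:ℝ))
    (Set.Ioi (0:ℝ)) (Set.Ioo (-π) π)
  beta_reduce at hprodint
  rw [hcongr, Measure.volume_eq_prod, hprodint, setIntegral_indicator measurableSet_Ioo]
  have hinter : Set.Ioi (0:ℝ) ∩ Set.Ioo 0 R = Set.Ioo 0 R := by
    ext x; simp only [Set.mem_inter_iff, Set.mem_Ioi, Set.mem_Ioo]; tauto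
  rw [hinter]
  have hconst : ∫ _ in Set.Ioo (-π) π, (1:ℝ) = 2 * π := by
    rw [setIntegral_const]
    simp [Real.volume_Ioo]
    rw [max_eq_left (by positivity)]
    ring
  have hrad : ∫ r in Set.Ioo 0 R, f0 r
      = (2 * π * (v:ℝ))⁻¹ * ((v:ℝ) * (1 - rexp (-R ^ 2 / (2 * (v:ℝ))))) := by
    rw [hf0]
    simp_rw [show ∀ r : ℝ, r * ((2 * π * (v:ℝ))⁻¹ * rexp (-r ^ 2 / (2 * (v:ℝ))))
        = (2 * π * (v:ℝ))⁻¹ * (r * rexp (-r ^ 2 / (2 * (v:ℝ)))) from fun r => by ring]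
    rw [integral_const_mul, radial_integral hv R hR]
  rw [hconst, hrad]
  field_simp

lemma gpdf_half (z : ℝ) : gaussianPDFReal 0 (1/2) z = (√π)⁻¹ * rexp (-z ^ 2) := by
  rw [gaussianPDFReal]
  have h1 : ((1/2 : ℝ≥0) : ℝ) = 1/2 := by norm_num
  rw [h1]
  norm_num
  rw [mul_comm ((√π)⁻¹), ← mul_assoc, mul_inv_cancel₀ (by positivity : (√2:ℝ) ≠ 0), one_mul]

lemma integral_exp_neg_sq_Iio (b : ℝ) (hb : 0 < b) :
    ∫ z in Set.Iio (0:ℝ), rexp (-b * z ^ 2) = √(π / b) / 2 := by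
  have h := integral_comp_neg_Iic (0:ℝ) (fun x => rexp (-b * x ^ 2))
  simp only [neg_zero] at h
  have heq : ∫ z in Set.Iio (0:ℝ), rexp (-b * z ^ 2) = ∫ z in Set.Iic (0:ℝ), rexp (-b * z ^ 2) :=
    setIntegral_congr_set Iio_ae_eq_Iic
  rw [heq, ← integral_gaussian_Ioi b, ← h]
  congr 1
  ext z
  ring_nf

lemma final_integral {v : ℝ≥0} (hv : v ≠ 0) :
    (∫⁻ z, (if z < 0 then ENNReal.ofReal (1 - rexp (-(2 * z ^ 2) / (v:ℝ))) else 0)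
        ∂(gaussianReal 0 (1/2)))
      = ENNReal.ofReal (1/2 - 1/2 * (1 + 2/(v:ℝ)) ^ (-(1:ℝ)/2)) := by
  have hvpos : (0:ℝ) < v := by exact_mod_cast pos_iff_ne_zero.2 hv
  have hFm : Measurable fun z : ℝ =>
      (if z < 0 then ENNReal.ofReal (1 - rexp (-(2 * z ^ 2) / (v:ℝ))) else 0) := by
    refine Measurable.ite measurableSet_Iio ?_ measurable_const
    fun_prop
  rw [gaussianReal_of_var_ne_zero _ (by norm_num : (1/2 : ℝ≥0) ≠ 0),
    lintegral_withDensity_eq_lintegral_mul _ (measurable_gaussianPDF _ _) hFm]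
  have hind : (fun z => gaussianPDF 0 (1/2) z *
        (if z < 0 then ENNReal.ofReal (1 - rexp (-(2 * z ^ 2) / (v:ℝ))) else 0))
      = Set.indicator (Set.Iio 0) (fun z =>
          ENNReal.ofReal (gaussianPDFReal 0 (1/2) z * (1 - rexp (-(2 * z ^ 2) / (v:ℝ))))) := by
    funext z
    by_cases hz : z < 0
    · rw [Set.indicator_of_mem (Set.mem_Iio.2 hz), if_pos hz, gaussianPDF,
        ← ENNReal.ofReal_mul (gaussianPDFReal_nonneg _ _ _)]
    · rw [Set.indicator_of_notMem (by simpa using hz), if_neg hz, mul_zero]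
  show (∫⁻ z, (fun z => gaussianPDF 0 (1/2) z * _) z) = _
  rw [hind, lintegral_indicator measurableSet_Iio]
  set G : ℝ → ℝ := fun z => gaussianPDFReal 0 (1/2) z * (1 - rexp (-(2 * z ^ 2) / (v:ℝ)))
    with hG
  have hexple : ∀ z : ℝ, rexp (-(2 * z ^ 2) / (v:ℝ)) ≤ 1 := by
    intro z
    rw [Real.exp_le_one_iff]
    exact div_nonpos_of_nonpos_of_nonneg (neg_nonpos.2 (by positivity)) hvpos.le
  have hGint : Integrable G := by
    have hb : Integrable (fun z : ℝ =>
        (1 - rexp (-(2 * z ^ 2) / (v:ℝ))) * gaussianPDFReal 0 (1/2) z) := by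
      refine (integrable_gaussianPDFReal 0 (1/2)).bdd_mul (c := 1)
        ((continuous_const.sub (by fun_prop)).aestronglyMeasurable) (Filter.Eventually.of_forall fun z => ?_)
      rw [Real.norm_eq_abs, abs_le]
      have h0 : (0:ℝ) < rexp (-(2 * z ^ 2) / (v:ℝ)) := Real.exp_pos _
      have h1 := hexple z
      constructor <;> linarith
    refine hb.congr (Filter.Eventually.of_forall fun z => ?_)
    simp only [hG]
    ring
  have hGnn : ∀ z, 0 ≤ G z := by
    intro z
    simp only [hG]
    exact mul_nonneg (gaussianPDFReal_nonneg _ _ _) (by linarith [hexple z])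
  rw [← ofReal_integral_eq_lintegral_ofReal hGint.restrict
    (Filter.Eventually.of_forall fun z => hGnn z)]
  congr 1
  -- now the real computation
  have hsimp : ∀ z : ℝ, G z = (√π)⁻¹ * rexp (-1 * z ^ 2)
      - (√π)⁻¹ * rexp (-(1 + 2/(v:ℝ)) * z ^ 2) := by
    intro z
    simp only [hG]
    rw [gpdf_half]
    have e1 : rexp ((-1 : ℝ) * z ^ 2) = rexp (-z ^ 2) := by norm_num
    have e2 : rexp (-(1 + 2/(v:ℝ)) * z ^ 2) = rexp (-z ^ 2) * rexp (-(2 * z ^ 2) / (v:ℝ)) := by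
      rw [← Real.exp_add]
      congr 1
      field_simp
      ring
    rw [e1, e2]
    ring
  have hint1 : IntegrableOn (fun z : ℝ => (√π)⁻¹ * rexp (-1 * z ^ 2)) (Set.Iio 0) :=
    (((integrable_exp_neg_mul_sq (by norm_num : (0:ℝ) < 1))).const_mul _).restrict
  have hint2 : IntegrableOn (fun z : ℝ => (√π)⁻¹ * rexp (-(1 + 2/(v:ℝ)) * z ^ 2)) (Set.Iio 0) :=
    (((integrable_exp_neg_mul_sq (by positivity : (0:ℝ) < 1 + 2/(v:ℝ)))).const_mul _).restrict
  rw [show (∫ z in Set.Iio (0:ℝ), G z) = ∫ z in Set.Iio (0:ℝ),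
      ((fun z => (√π)⁻¹ * rexp (-1 * z ^ 2)) z - (fun z => (√π)⁻¹ * rexp (-(1 + 2/(v:ℝ)) * z ^ 2)) z)
    from integral_congr_ae (Filter.Eventually.of_forall fun z => hsimp z)]
  rw [integral_sub hint1 hint2, integral_const_mul, integral_const_mul,
    integral_exp_neg_sq_Iio 1 (by norm_num), integral_exp_neg_sq_Iio _ (by positivity)]
  have hc : (0:ℝ) < 1 + 2/(v:ℝ) := by positivity
  have h1 : (√π)⁻¹ * (√(π / 1) / 2) = 1/2 := by
    rw [div_one]
    rw [inv_mul_eq_div, div_div]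
    rw [div_eq_iff (by positivity)]
    ring
  have hrpow : (1 + 2/(v:ℝ)) ^ (-(1:ℝ)/2) = (√(1 + 2/(v:ℝ)))⁻¹ := by
    rw [show (-(1:ℝ)/2) = -(1/2) by norm_num, Real.rpow_neg hc.le, ← Real.sqrt_eq_rpow]
  have h2 : (√π)⁻¹ * (√(π / (1 + 2/(v:ℝ))) / 2) = 1/2 * (1 + 2/(v:ℝ)) ^ (-(1:ℝ)/2) := by
    rw [hrpow, Real.sqrt_div pi_pos.le]
    have hπ : (0:ℝ) < √π := Real.sqrt_pos.2 pi_pos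
    have hsc : (0:ℝ) < √(1 + 2/(v:ℝ)) := Real.sqrt_pos.2 hc
    field_simp
  rw [h1, h2]

/-- Theorem 2 (secrecy outage under imperfect CSI): with `(M₁, M₂)` the main-channel
fading coefficient, `(H₁, H₂)` the eavesdropper fading coefficient (all independent real
Gaussians of mean 0 and variance `1/2`), `(D₁, D₂)` the independent Gaussian estimation
error of variance `σ² = v > 0` per dimension, and SNR scalings `c_M, c_W > 0`, the
probability of a secrecy outage `P(γ̂_W < min(γ_M, γ_W))` is at most
`1/2 - (1/2)(1 + 2/σ²)^(-1/2)`. -/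
theorem secrecy_outage_probability_upper_bound
    {Ω : Type*} [MeasureSpace Ω] [IsProbabilityMeasure (ℙ : Measure Ω)]
    (H₁ H₂ M₁ M₂ D₁ D₂ : Ω → ℝ) (v : ℝ≥0) (hv : 0 < v) (cM cW : ℝ)
    (hcM : 0 < cM) (hcW : 0 < cW)
    (hH₁ : Measurable H₁) (hH₂ : Measurable H₂)
    (hM₁ : Measurable M₁) (hM₂ : Measurable M₂)
    (hD₁ : Measurable D₁) (hD₂ : Measurable D₂)
    (hindep : iIndepFun ![H₁, H₂, M₁, M₂, D₁, D₂] ℙ)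
    (hH₁d : Measure.map H₁ ℙ = gaussianReal 0 (1 / 2))
    (hH₂d : Measure.map H₂ ℙ = gaussianReal 0 (1 / 2))
    (hM₁d : Measure.map M₁ ℙ = gaussianReal 0 (1 / 2))
    (hM₂d : Measure.map M₂ ℙ = gaussianReal 0 (1 / 2))
    (hD₁d : Measure.map D₁ ℙ = gaussianReal 0 v)
    (hD₂d : Measure.map D₂ ℙ = gaussianReal 0 v) :
    ℙ {ω | cW * ((H₁ ω + D₁ ω) ^ 2 + (H₂ ω + D₂ ω) ^ 2)
            < min (cM * (M₁ ω ^ 2 + M₂ ω ^ 2)) (cW * (H₁ ω ^ 2 + H₂ ω ^ 2))}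
      ≤ ENNReal.ofReal
          (1 / 2 - 1 / 2 * (1 + 2 / (v : ℝ)) ^ (-(1 : ℝ) / 2)) := by
  have hv0 : v ≠ 0 := hv.ne'
  set μD := (gaussianReal 0 v).prod (gaussianReal 0 v) with hμD
  set μH := (gaussianReal 0 (1/2 : ℝ≥0)).prod (gaussianReal 0 (1/2 : ℝ≥0)) with hμH
  -- the enlarged event
  set S : Set ((ℝ × ℝ) × (ℝ × ℝ)) :=
    {q | 2 * q.1.1 * q.2.1 + 2 * q.1.2 * q.2.2 + (q.1.1 ^ 2 + q.1.2 ^ 2) < 0} with hSdef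
  have hSm : MeasurableSet S := by
    apply measurableSet_lt (by fun_prop) measurable_const
  set X : Ω → (ℝ × ℝ) × (ℝ × ℝ) := fun ω => ((D₁ ω, D₂ ω), (H₁ ω, H₂ ω)) with hX
  have hXm : Measurable X := by fun_prop
  -- step 1: inclusion
  have hsub : {ω | cW * ((H₁ ω + D₁ ω) ^ 2 + (H₂ ω + D₂ ω) ^ 2)
      < min (cM * (M₁ ω ^ 2 + M₂ ω ^ 2)) (cW * (H₁ ω ^ 2 + H₂ ω ^ 2))} ⊆ X ⁻¹' S := by
    intro ω h
    simp only [Set.mem_setOf_eq] at h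
    have h2 : cW * ((H₁ ω + D₁ ω) ^ 2 + (H₂ ω + D₂ ω) ^ 2)
        < cW * (H₁ ω ^ 2 + H₂ ω ^ 2) := lt_of_lt_of_le h (min_le_right _ _)
    have h3 : (H₁ ω + D₁ ω) ^ 2 + (H₂ ω + D₂ ω) ^ 2 < H₁ ω ^ 2 + H₂ ω ^ 2 :=
      (mul_lt_mul_iff_right₀ hcW).1 h2
    show 2 * D₁ ω * H₁ ω + 2 * D₂ ω * H₂ ω + (D₁ ω ^ 2 + D₂ ω ^ 2) < 0
    nlinarith [h3]
  refine le_trans (measure_mono hsub) ?_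
  -- step 2: joint law
  have hDind : IndepFun D₁ D₂ ℙ := by
    have := hindep.indepFun (show (4 : Fin 6) ≠ 5 by decide)
    simpa using this
  have hHind : IndepFun H₁ H₂ ℙ := by
    have := hindep.indepFun (show (0 : Fin 6) ≠ 1 by decide)
    simpa using this
  have hmeas : ∀ i, Measurable (![H₁, H₂, M₁, M₂, D₁, D₂] i) := by
    intro i
    fin_cases i <;> simpa
  have hDHind : IndepFun (fun ω => (D₁ ω, D₂ ω)) (fun ω => (H₁ ω, H₂ ω)) ℙ := by
    have := hindep.indepFun_prodMk_prodMk hmeas 4 5 0 1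
      (by decide) (by decide) (by decide) (by decide)
    simpa using this
  have hDmap : Measure.map (fun ω => (D₁ ω, D₂ ω)) ℙ = μD := by
    refine ((indepFun_iff_map_prod_eq_prod_map_map hD₁.aemeasurable hD₂.aemeasurable).1
      hDind).trans ?_
    rw [hμD, hD₁d, hD₂d]
  have hHmap : Measure.map (fun ω => (H₁ ω, H₂ ω)) ℙ = μH := by
    refine ((indepFun_iff_map_prod_eq_prod_map_map hH₁.aemeasurable hH₂.aemeasurable).1
      hHind).trans ?_
    rw [hμH, hH₁d, hH₂d]
  have hXmap : Measure.map X ℙ = μD.prod μH := by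
    rw [← hDmap, ← hHmap]
    exact (indepFun_iff_map_prod_eq_prod_map_map (by fun_prop) (by fun_prop)).1 hDHind
  have hPX : ℙ (X ⁻¹' S) = (μD.prod μH) S := by
    rw [← hXmap, Measure.map_apply hXm hSm]
  rw [hPX]
  -- step 3: Fubini over d
  rw [Measure.prod_apply hSm]
  -- step 4: inner probability a.e.
  have hnull : μD {(0 : ℝ × ℝ)} = 0 := by
    have h01 : ({(0 : ℝ × ℝ)} : Set (ℝ × ℝ)) = ({0} : Set ℝ) ×ˢ ({0} : Set ℝ) := by
      ext p
      simp [Prod.ext_iff]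
    rw [hμD, h01, Measure.prod_prod]
    have : gaussianReal 0 v ({0} : Set ℝ) = 0 :=
      gaussianReal_absolutelyContinuous 0 hv0 (measure_singleton 0)
    rw [this, zero_mul]
  have hae : ∀ᵐ d ∂μD, μH (Prod.mk d ⁻¹' S)
      = gaussianReal 0 (1/2 : ℝ≥0) (Set.Iio (-(Real.sqrt (d.1 ^ 2 + d.2 ^ 2)) / 2)) := by
    rw [ae_iff]
    refine measure_mono_null ?_ hnull
    intro d hd
    simp only [Set.mem_setOf_eq] at hd
    by_contra hd0
    apply hd
    have hd' : d ≠ 0 := by simpa using hd0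
    have := inner_prob (v := 1/2) (by norm_num) d hd'
    rw [hμH]
    convert this using 2
    rfl
  rw [lintegral_congr_ae hae]
  -- step 5: swap to z-integral
  set T : Set ((ℝ × ℝ) × ℝ) :=
    {q | q.2 < -(Real.sqrt (q.1.1 ^ 2 + q.1.2 ^ 2)) / 2} with hTdef
  have hTm : MeasurableSet T := by
    apply measurableSet_lt (by fun_prop) (by fun_prop)
  have hswap : (∫⁻ d, gaussianReal 0 (1/2 : ℝ≥0)
        (Set.Iio (-(Real.sqrt (d.1 ^ 2 + d.2 ^ 2)) / 2)) ∂μD)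
      = (μD.prod (gaussianReal 0 (1/2 : ℝ≥0))) T := by
    rw [Measure.prod_apply hTm]
    refine lintegral_congr fun d => ?_
    congr 1
  rw [hswap, Measure.prod_apply_symm hTm]
  have hsec : ∀ z : ℝ, μD {d : ℝ × ℝ | (d, z) ∈ T}
      = (if z < 0 then ENNReal.ofReal (1 - rexp (-(2 * z ^ 2) / (v:ℝ))) else 0) := by
    intro z
    by_cases hz : z < 0
    · rw [if_pos hz]
      have hR : (0:ℝ) < -2 * z := by linarith
      have hset : {d : ℝ × ℝ | (d, z) ∈ T} = {p : ℝ × ℝ | p.1 ^ 2 + p.2 ^ 2 < (-2 * z) ^ 2} := by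
        ext d
        simp only [hTdef, Set.mem_setOf_eq]
        rw [show (z < (-(Real.sqrt (d.1 ^ 2 + d.2 ^ 2)) / 2 : ℝ))
            ↔ Real.sqrt (d.1 ^ 2 + d.2 ^ 2) < -2 * z by constructor <;> intro h <;> linarith]
        exact Real.sqrt_lt' hR
      rw [hset, hμD, disk_prob hv0 _ hR]
      congr 2
      field_simp
    · rw [if_neg hz]
      have hset : {d : ℝ × ℝ | (d, z) ∈ T} = ∅ := by
        ext d
        simp only [hTdef, Set.mem_setOf_eq, Set.mem_empty_iff_false, iff_false]
        intro h
        have h1 : (0:ℝ) ≤ Real.sqrt (d.1 ^ 2 + d.2 ^ 2) := Real.sqrt_nonneg _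
        push_neg at hz
        linarith
      rw [hset, measure_empty]
  apply le_of_eq
  calc ∫⁻ y, μD ((fun x => (x, y)) ⁻¹' T) ∂(gaussianReal 0 (1/2 : ℝ≥0))
      = ∫⁻ z, (if z < 0 then ENNReal.ofReal (1 - rexp (-(2 * z ^ 2) / (v:ℝ))) else 0)
          ∂(gaussianReal 0 (1/2 : ℝ≥0)) := lintegral_congr fun z => hsec z
    _ = ENNReal.ofReal (1/2 - 1/2 * (1 + 2/(v:ℝ)) ^ (-(1:ℝ)/2)) := final_integral hv0
    _ = ENNReal.ofReal (1 / 2 - 1 / 2 * (1 + 2 / (v : ℝ)) ^ (-(1 : ℝ) / 2)) := by norm_num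
end
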